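/- Let φ be a continuous convex piecewise quadratic function on [x_1lo, x_shi] with segments φ_i(x) = q_i x^2 + l_i x + c_i (q_i >= 0) on intervals [x_ilo, x_ihi], and let h be a continuous convex piecewise affine function on the same partition with segments h_i(x) = α_i x + β_i. Suppose for every i in {2,...,s} and j < i: φ_j(x_ilo) + h_j(x_ilo) <= φ_i(x_ilo) + h_i(x_ilo) and φ_j(x_ihi) + h_j(x_ihi) <= φ_i(x_ilo) + h_i(x_ilo) + (x_ihi - x_ilo)(2 q_i x_ilo + l_i + α_i); and for every i in {1,...,s-1} and j > i: φ_j(x_ihi) + h_j(x_ihi) <= φ_i(x_ihi) + h_i(x_ihi) and φ_j(x_ilo) + h_j(x_ilo) <= φ_i(x_ihi) + h_i(x_ihi) - (x_ihi - x_ilo)(2 q_i x_ihi + l_i + α_i). Then φ(x) + h(x) = max_{1<=i<=s} (φ_i(x) + α_i x + β_i) for all x in [x_1lo, x_shi]. -/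

import Mathlib

open Set

/-- Theorem 1 of the paper: Let `φ` be a continuous convex piecewise
quadratic function with segments `φᵢ(x) = qᵢx² + lᵢx + cᵢ` (with `qᵢ ≥ 0`) on a 1D
partition, and `h` a continuous convex piecewise affine function `hᵢ(x) = αᵢx + βᵢ`
on the same partition. If the dominance conditions (6)-(7) hold, then
`φ(x) + h(x) = max_{1 ≤ i ≤ s} (φᵢ(x) + αᵢx + βᵢ)` on the whole domain. -/
theorem pwq_plus_pwa_eq_maxout
    (s : ℕ)
    (x : Fin (s + 2) → ℝ) (hx : StrictMono x)
    (q l c α β : Fin (s + 1) → ℝ)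
    (φ h : ℝ → ℝ)
    -- φ equals the quadratic segments on the pieces
    (hφ : ∀ i : Fin (s + 1), ∀ t ∈ Icc (x i.castSucc) (x i.succ),
      φ t = q i * t ^ 2 + l i * t + c i)
    -- h equals the affine segments on the pieces
    (hh : ∀ i : Fin (s + 1), ∀ t ∈ Icc (x i.castSucc) (x i.succ),
      h t = α i * t + β i)
    -- convexity of φ: nonnegative curvature and nondecreasing one-sided slopes
    (hq : ∀ i, 0 ≤ q i)
    (hkink : ∀ i : Fin s,
      2 * q i.castSucc * x i.castSucc.succ + l i.castSucc ≤
        2 * q i.succ * x i.castSucc.succ + l i.succ)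
    -- convexity of h: nondecreasing slopes
    (hα : ∀ i : Fin s, α i.castSucc ≤ α i.succ)
    -- conditions (6): for j < i
    (hcond6a : ∀ i j : Fin (s + 1), j < i →
      q j * (x i.castSucc) ^ 2 + l j * x i.castSucc + c j + α j * x i.castSucc + β j ≤
        q i * (x i.castSucc) ^ 2 + l i * x i.castSucc + c i + α i * x i.castSucc + β i)
    (hcond6b : ∀ i j : Fin (s + 1), j < i →
      q j * (x i.succ) ^ 2 + l j * x i.succ + c j + α j * x i.succ + β j ≤
        q i * (x i.castSucc) ^ 2 + l i * x i.castSucc + c i + α i * x i.castSucc + β i +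
          (x i.succ - x i.castSucc) * (2 * q i * x i.castSucc + l i + α i))
    -- conditions (7): for j > i
    (hcond7a : ∀ i j : Fin (s + 1), i < j →
      q j * (x i.succ) ^ 2 + l j * x i.succ + c j + α j * x i.succ + β j ≤
        q i * (x i.succ) ^ 2 + l i * x i.succ + c i + α i * x i.succ + β i)
    (hcond7b : ∀ i j : Fin (s + 1), i < j →
      q j * (x i.castSucc) ^ 2 + l j * x i.castSucc + c j + α j * x i.castSucc + β j ≤
        q i * (x i.succ) ^ 2 + l i * x i.succ + c i + α i * x i.succ + β i -
          (x i.succ - x i.castSucc) * (2 * q i * x i.succ + l i + α i)) :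
    ∀ t ∈ Icc (x 0) (x (Fin.last (s + 1))),
      φ t + h t = Finset.univ.sup' Finset.univ_nonempty
        (fun i : Fin (s + 1) => q i * t ^ 2 + l i * t + c i + α i * t + β i) := by
  intro t ht
  -- find the piece containing t
  obtain ⟨i, hia, hib⟩ : ∃ i : Fin (s + 1), x i.castSucc ≤ t ∧ t ≤ x i.succ := by
    classical
    set F : Finset (Fin (s + 1)) :=
      Finset.univ.filter (fun i : Fin (s + 1) => x i.castSucc ≤ t) with hF
    have hF0 : (0 : Fin (s + 1)) ∈ F := by
      simp only [hF, Finset.mem_filter, Finset.mem_univ, true_and]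
      simpa using ht.1
    have hFne : F.Nonempty := ⟨0, hF0⟩
    refine ⟨F.max' hFne, ?_, ?_⟩
    · have := F.max'_mem hFne
      simp only [hF, Finset.mem_filter] at this
      exact this.2
    · set i := F.max' hFne with hi
      by_cases hlast : i = Fin.last s
      · have : i.succ = Fin.last (s + 1) := by rw [hlast, Fin.succ_last]
        rw [this]; exact ht.2
      · obtain ⟨j, hjeq⟩ := Fin.exists_castSucc_eq.mpr hlast
        by_contra hcon
        push_neg at hcon
        have hmem : j.succ ∈ F := by
          simp only [hF, Finset.mem_filter, Finset.mem_univ, true_and]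
          rw [← hjeq, Fin.succ_castSucc] at hcon
          exact le_of_lt hcon
        have hle := F.le_max' _ hmem
        rw [← hi, ← hjeq] at hle
        exact absurd hle (not_le.mpr (Fin.castSucc_lt_succ : j.castSucc < j.succ))
  have hab : x i.castSucc < x i.succ := hx (Fin.castSucc_lt_succ : i.castSucc < i.succ)
  have hval : φ t + h t = q i * t ^ 2 + l i * t + c i + α i * t + β i := by
    rw [hφ i t ⟨hia, hib⟩, hh i t ⟨hia, hib⟩]; ring
  rw [hval]
  apply le_antisymm
  · exact Finset.le_sup' (fun i : Fin (s + 1) => q i * t ^ 2 + l i * t + c i + α i * t + β i) (Finset.mem_univ i)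
  · apply Finset.sup'_le
    intro j _
    rcases lt_trichotomy j i with hj | hj | hj
    · have h1 := hcond6a i j hj
      have h2 := hcond6b i j hj
      have e1 : 0 ≤ x i.succ - t := sub_nonneg.2 hib
      have e2 : 0 ≤ t - x i.castSucc := sub_nonneg.2 hia
      have e3 : 0 < x i.succ - x i.castSucc := sub_pos.2 hab
      nlinarith [mul_nonneg e1 (sub_nonneg.2 h1), mul_nonneg e2 (sub_nonneg.2 h2),
        mul_nonneg (mul_nonneg (mul_nonneg (hq j) e1) e2) e3.le,
        mul_nonneg (mul_nonneg (hq i) (sq_nonneg (t - x i.castSucc))) e3.le]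
    · subst hj; exact le_rfl
    · have h1 := hcond7a i j hj
      have h2 := hcond7b i j hj
      have e1 : 0 ≤ x i.succ - t := sub_nonneg.2 hib
      have e2 : 0 ≤ t - x i.castSucc := sub_nonneg.2 hia
      have e3 : 0 < x i.succ - x i.castSucc := sub_pos.2 hab
      nlinarith [mul_nonneg e2 (sub_nonneg.2 h1), mul_nonneg e1 (sub_nonneg.2 h2),
        mul_nonneg (mul_nonneg (mul_nonneg (hq j) e1) e2) e3.le,
        mul_nonneg (mul_nonneg (hq i) (sq_nonneg (t - x i.succ))) e3.le]
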